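/- Let Y_1, …, Y_n ∈ ℝ^p be vectors with sample mean Ȳ = (Y_1 + ⋯ + Y_n)/n, let μ ∈ ℝ^p, and suppose κ_p is a constant such that z ↦ (z zᵀ)^{1/2} is κ_p-Lipschitz on ℝ^p with respect to the Frobenius norm. Define Ω̆ = ( (1/n) Σ_{i=1}^n ((Y_i − Ȳ)(Y_i − Ȳ)ᵀ)^{1/2} )² and Ω̃ = ( (1/n) Σ_{i=1}^n ((Y_i − μ)(Y_i − μ)ᵀ)^{1/2} )². Then d_S(Ω̆, Ω̃) ≤ κ_p ‖Ȳ − μ‖. -/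

import Mathlib

open Matrix MeasureTheory ProbabilityTheory

noncomputable def eunorm {p : ℕ} (x : Fin p → ℝ) : ℝ := Real.sqrt (∑ i, x i ^ 2)

noncomputable def frob {p : ℕ} (M : Matrix (Fin p) (Fin p) ℝ) : ℝ :=
  Real.sqrt (∑ i, ∑ j, M i j ^ 2)

open Classical in
noncomputable def msqrt {p : ℕ} (A : Matrix (Fin p) (Fin p) ℝ) : Matrix (Fin p) (Fin p) ℝ :=
  if h : A.PosSemidef then
    h.1.eigenvectorUnitary.1 * diagonal (Real.sqrt ∘ h.1.eigenvalues) *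
      (star h.1.eigenvectorUnitary : Matrix (Fin p) (Fin p) ℝ) else 0

noncomputable def dS {p : ℕ} (A B : Matrix (Fin p) (Fin p) ℝ) : ℝ := frob (msqrt A - msqrt B)

noncomputable def mExp {p : ℕ} {Ωs : Type*} [MeasurableSpace Ωs] (μ : Measure Ωs)
    (F : Ωs → Matrix (Fin p) (Fin p) ℝ) : Matrix (Fin p) (Fin p) ℝ :=
  Matrix.of fun i j => ∫ ω, F ω i j ∂μ

noncomputable def covDS {p : ℕ} {Ωs : Type*} [MeasurableSpace Ωs] (μ : Measure Ωs)
    (Y : Ωs → Fin p → ℝ) : Matrix (Fin p) (Fin p) ℝ :=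
  (mExp μ fun ω => msqrt (vecMulVec (Y ω - fun r => ∫ ω', Y ω' r ∂μ) (Y ω - fun r => ∫ ω', Y ω' r ∂μ))) *
  (mExp μ fun ω => msqrt (vecMulVec (Y ω - fun r => ∫ ω', Y ω' r ∂μ) (Y ω - fun r => ∫ ω', Y ω' r ∂μ)))


attribute [local instance] Matrix.frobeniusNormedAddCommGroup Matrix.frobeniusNormedSpace

lemma frob_eq_norm {p : ℕ} (M : Matrix (Fin p) (Fin p) ℝ) : frob M = ‖M‖ := by
  rw [frob, Matrix.frobenius_norm_def, Real.sqrt_eq_rpow]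
  congr 1
  simp [Real.rpow_two, sq_abs, Real.norm_eq_abs]

lemma psd_vecMulVec {p : ℕ} (z : Fin p → ℝ) : (vecMulVec z z).PosSemidef := by
  refine Matrix.PosSemidef.of_dotProduct_mulVec_nonneg ?_ ?_
  · ext i j
    simp [conjTranspose_apply, vecMulVec_apply, mul_comm]
  · intro x
    have h : star x ⬝ᵥ (vecMulVec z z *ᵥ x) = (z ⬝ᵥ x) ^ 2 := by
      simp only [dotProduct, mulVec, vecMulVec_apply, star_trivial, sq]
      rw [Finset.sum_mul_sum]
      simp_rw [Finset.mul_sum]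
      exact Finset.sum_congr rfl fun i _ => Finset.sum_congr rfl fun j _ => by ring
    rw [h]
    positivity

lemma psd_smul {p : ℕ} {A : Matrix (Fin p) (Fin p) ℝ} (hA : A.PosSemidef) {c : ℝ}
    (hc : 0 ≤ c) : (c • A).PosSemidef := by
  refine Matrix.PosSemidef.of_dotProduct_mulVec_nonneg ?_ (fun x => ?_)
  · unfold Matrix.IsHermitian
    rw [conjTranspose_smul, hA.1.eq, star_trivial]
  · rw [smul_mulVec, dotProduct_smul, smul_eq_mul]
    exact mul_nonneg hc (hA.dotProduct_mulVec_nonneg x)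

lemma psd_sum {p : ℕ} {ι : Type*} (s : Finset ι) (f : ι → Matrix (Fin p) (Fin p) ℝ)
    (h : ∀ i ∈ s, (f i).PosSemidef) : (∑ i ∈ s, f i).PosSemidef :=
  Finset.sum_induction f Matrix.PosSemidef (fun _ _ ha hb => ha.add hb) .zero h

lemma msqrt_eq {p : ℕ} {A : Matrix (Fin p) (Fin p) ℝ} (hA : A.PosSemidef) :
    msqrt A = cfc Real.sqrt A := by
  unfold msqrt
  rw [dif_pos hA, hA.1.cfc_eq, IsHermitian.cfc, Unitary.conjStarAlgAut_apply]
  rfl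

open scoped MatrixOrder in
lemma msqrt_posSemidef {p : ℕ} {A : Matrix (Fin p) (Fin p) ℝ} (hA : A.PosSemidef) :
    (msqrt A).PosSemidef := by
  rw [msqrt_eq hA]
  exact nonneg_iff_posSemidef.mp (cfc_nonneg (fun x _ => Real.sqrt_nonneg x))

open scoped MatrixOrder in
lemma msqrt_mul_self {p : ℕ} {S : Matrix (Fin p) (Fin p) ℝ} (hS : S.PosSemidef) :
    msqrt (S * S) = S := by
  have h2 : (S * S).PosSemidef := by rw [← pow_two]; exact hS.pow 2
  rw [msqrt_eq h2]
  rw [← cfcₙ_eq_cfc, ← CFC.sqrt_eq_real_sqrt _ h2.nonneg, CFC.sqrt_mul_self _ hS.nonneg]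

lemma eunorm_sub_comm {p : ℕ} (a b : Fin p → ℝ) : eunorm (a - b) = eunorm (b - a) := by
  unfold eunorm
  congr 1
  exact Finset.sum_congr rfl fun i _ => by rw [Pi.sub_apply, Pi.sub_apply]; ring

/-- If `z ↦ (z zᵀ)^{1/2}` is `κ_p`-Lipschitz, then the sample `d_S`-covariance
computed with the sample mean `Ȳ` and the one computed with any `μ` satisfy
`d_S(Ω̆, Ω̃) ≤ κ_p ‖Ȳ − μ‖`. -/
theorem stmt7 {p : ℕ} (κ : ℝ)
    (hκ : ∀ z z' : Fin p → ℝ,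
      frob (msqrt (vecMulVec z z) - msqrt (vecMulVec z' z')) ≤ κ * eunorm (z - z'))
    {n : ℕ} (hn : 0 < n) (Y : Fin n → Fin p → ℝ) (μv : Fin p → ℝ)
    (Ybar : Fin p → ℝ) (hYbar : Ybar = (n : ℝ)⁻¹ • ∑ i, Y i)
    (Ωbreve Ωtilde : Matrix (Fin p) (Fin p) ℝ)
    (hΩbreve : Ωbreve =
      ((n : ℝ)⁻¹ • ∑ i, msqrt (vecMulVec (Y i - Ybar) (Y i - Ybar))) *
      ((n : ℝ)⁻¹ • ∑ i, msqrt (vecMulVec (Y i - Ybar) (Y i - Ybar))))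
    (hΩtilde : Ωtilde =
      ((n : ℝ)⁻¹ • ∑ i, msqrt (vecMulVec (Y i - μv) (Y i - μv))) *
      ((n : ℝ)⁻¹ • ∑ i, msqrt (vecMulVec (Y i - μv) (Y i - μv)))) :
    dS Ωbreve Ωtilde ≤ κ * eunorm (Ybar - μv) := by
  classical
  set M : Fin n → Matrix (Fin p) (Fin p) ℝ :=
    fun i => msqrt (vecMulVec (Y i - Ybar) (Y i - Ybar)) with hM
  set N : Fin n → Matrix (Fin p) (Fin p) ℝ :=
    fun i => msqrt (vecMulVec (Y i - μv) (Y i - μv)) with hN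
  have hA : PosSemidef ((n : ℝ)⁻¹ • ∑ i, M i) :=
    psd_smul (psd_sum _ _ fun i _ => msqrt_posSemidef (psd_vecMulVec _)) (by positivity)
  have hB : PosSemidef ((n : ℝ)⁻¹ • ∑ i, N i) :=
    psd_smul (psd_sum _ _ fun i _ => msqrt_posSemidef (psd_vecMulVec _)) (by positivity)
  have e1 : msqrt Ωbreve = (n : ℝ)⁻¹ • ∑ i, M i := by
    rw [hΩbreve]; exact msqrt_mul_self hA
  have e2 : msqrt Ωtilde = (n : ℝ)⁻¹ • ∑ i, N i := by
    rw [hΩtilde]; exact msqrt_mul_self hB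
  have hdiff : msqrt Ωbreve - msqrt Ωtilde = (n : ℝ)⁻¹ • ∑ i, (M i - N i) := by
    rw [e1, e2, Finset.sum_sub_distrib, smul_sub]
  rw [dS, hdiff, frob_eq_norm, norm_smul]
  have hbound : ‖∑ i, (M i - N i)‖ ≤ ∑ _i : Fin n, (κ * eunorm (Ybar - μv)) := by
    refine (norm_sum_le _ _).trans (Finset.sum_le_sum fun i _ => ?_)
    have h := hκ (Y i - Ybar) (Y i - μv)
    rw [frob_eq_norm, sub_sub_sub_cancel_left, eunorm_sub_comm] at h
    exact h
  have hsum : ∑ _i : Fin n, (κ * eunorm (Ybar - μv)) = (n : ℝ) * (κ * eunorm (Ybar - μv)) := by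
    simp [Finset.sum_const, nsmul_eq_mul]
  have hn' : (0:ℝ) < (n : ℝ) := by exact_mod_cast hn
  calc ‖(n : ℝ)⁻¹‖ * ‖∑ i, (M i - N i)‖
      ≤ ‖(n : ℝ)⁻¹‖ * ((n : ℝ) * (κ * eunorm (Ybar - μv))) := by
        exact mul_le_mul_of_nonneg_left (hsum ▸ hbound) (norm_nonneg _)
    _ = κ * eunorm (Ybar - μv) := by
        rw [Real.norm_eq_abs, abs_of_nonneg (by positivity)]
        field_simp
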